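/- Let T₀ = Σ_{i=1}^M H₀^i/i! and suppose the filtered iteration is Ŝ₁ = S₁ − E₁, Ŝ_i = Ŝ_{i−1}H₀/i − E_i, with T̂₀ = Σ_{i=1}^M Ŝ_i and S_i = H₀^i/i!. Then T₀ − T̂₀ = Σ_{j=1}^M E_j Σ_{i=0}^{M−j} j! H₀^i/(i+j)!. -/

import Mathlib

/-- Filtered Taylor-series iteration: with `S_i = H₀^i/i!`, `T₀ = Σ_{i=1}^M S_i`,
`Ŝ₁ = S₁ - E₁`, `Ŝ_i = Ŝ_{i-1}H₀/i - E_i` and `T̂₀ = Σ_{i=1}^M Ŝ_i`, we have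
`T₀ - T̂₀ = Σ_{j=1}^M E_j Σ_{i=0}^{M-j} j! H₀^i/(i+j)!`. -/
theorem filtered_taylor_error {n : ℕ} (M : ℕ) (hM : 1 ≤ M)
    (H₀ : Matrix (Fin n) (Fin n) ℂ) (E Shat : ℕ → Matrix (Fin n) (Fin n) ℂ)
    (h1 : Shat 1 = H₀ - E 1)
    (hrec : ∀ i, 2 ≤ i → i ≤ M → Shat i = (i : ℂ)⁻¹ • (Shat (i - 1) * H₀) - E i) :
    (∑ i ∈ Finset.Icc 1 M, (i.factorial : ℂ)⁻¹ • H₀ ^ i) -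
        (∑ i ∈ Finset.Icc 1 M, Shat i) =
      ∑ j ∈ Finset.Icc 1 M, E j *
        ∑ i ∈ Finset.range (M - j + 1),
          ((j.factorial : ℂ) / ((i + j).factorial : ℂ)) • H₀ ^ i := by
  -- key pointwise identity
  have key : ∀ i, 1 ≤ i → i ≤ M →
      (i.factorial : ℂ)⁻¹ • H₀ ^ i - Shat i =
        ∑ j ∈ Finset.Icc 1 i,
          ((j.factorial : ℂ) / (i.factorial : ℂ)) • (E j * H₀ ^ (i - j)) := by
    intro i
    induction i with
    | zero => intro h; omega
    | succ k ih =>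
      intro _ hkM
      rcases Nat.eq_or_lt_of_le (Nat.one_le_iff_ne_zero.mpr (Nat.succ_ne_zero k)) with h1k | h2k
      · -- k + 1 = 1
        have hk0 : k = 0 := by omega
        subst hk0
        simp [h1]
      · -- k + 1 ≥ 2
        have hk1 : 1 ≤ k := by omega
        have hrecc := hrec (k + 1) (by omega) hkM
        simp only [Nat.add_sub_cancel] at hrecc
        have ihk := ih hk1 (by omega)
        have hfac : ((k + 1).factorial : ℂ) = (k + 1 : ℕ) * (k.factorial : ℂ) := by
          rw [Nat.factorial_succ]; push_cast; ring
        have hne : ((k : ℂ) + 1) ≠ 0 := by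
          have : (0:ℝ) < (k:ℝ) + 1 := by positivity
          exact_mod_cast (by exact_mod_cast this.ne' : ((k:ℂ)+1) ≠ 0)
        have hfacne : (k.factorial : ℂ) ≠ 0 := by
          exact_mod_cast Nat.cast_ne_zero.mpr k.factorial_ne_zero
        push_cast at hrecc
        rw [hrecc]
        have expand : ((k+1).factorial : ℂ)⁻¹ • H₀ ^ (k+1) =
            ((k:ℂ)+1)⁻¹ • (((k.factorial : ℂ)⁻¹ • H₀ ^ k) * H₀) := by
          rw [Matrix.smul_mul, smul_smul, pow_succ, hfac]
          push_cast
          rw [mul_inv]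
        rw [expand]
        have : ((k:ℂ)+1)⁻¹ • (((k.factorial : ℂ)⁻¹ • H₀ ^ k) * H₀)
            - (((k:ℂ)+1)⁻¹ • (Shat k * H₀) - E (k+1))
            = ((k:ℂ)+1)⁻¹ • ((((k.factorial : ℂ)⁻¹ • H₀ ^ k) - Shat k) * H₀) + E (k+1) := by
          rw [Matrix.sub_mul, smul_sub]; abel
        rw [this, ihk]
        rw [Finset.sum_Icc_succ_top (by omega : 1 ≤ k + 1)]
        congr 1
        · rw [Finset.sum_mul, Finset.smul_sum]
          apply Finset.sum_congr rfl
          intro j hj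
          have hj' : j ≤ k := (Finset.mem_Icc.mp hj).2
          rw [Matrix.smul_mul, smul_smul, mul_assoc, ← pow_succ]
          have : k - j + 1 = k + 1 - j := by omega
          rw [this]
          congr 1
          rw [hfac]
          field_simp
          push_cast; ring
        · rw [Nat.sub_self, pow_zero, Matrix.mul_one,
            div_self (Nat.cast_ne_zero.mpr (k+1).factorial_ne_zero), one_smul]
  -- rewrite LHS as double sum
  rw [← Finset.sum_sub_distrib]
  rw [Finset.sum_congr rfl (fun i hi => key i (Finset.mem_Icc.mp hi).1 (Finset.mem_Icc.mp hi).2)]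
  rw [Finset.sum_comm' (s := Finset.Icc 1 M) (t := fun i => Finset.Icc 1 i)
      (t' := Finset.Icc 1 M) (s' := fun j => Finset.Icc j M)
      (h := by intro i j; simp only [Finset.mem_Icc]; omega)]
  apply Finset.sum_congr rfl
  intro j hj
  obtain ⟨hj1, hjM⟩ := Finset.mem_Icc.mp hj
  rw [← Finset.Ico_add_one_right_eq_Icc, Finset.sum_Ico_eq_sum_range, Finset.mul_sum]
  have h2 : M + 1 - j = M - j + 1 := by omega
  rw [h2]
  apply Finset.sum_congr rfl
  intro i _
  rw [mul_smul_comm]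
  have e1 : j + i - j = i := by omega
  have e2 : j + i = i + j := by omega
  rw [e1, e2]
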